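/- If every variable of a CNF instance appears in exactly three clauses and each clause contains two or three distinct variables with all literals positive or all negative (monotone), and additionally the instance arises by applying Gold's rule to every mixed clause of an instance where each variable appears exactly three times with one literal appearing twice and the complementary literal once, then each variable of the resulting instance still appears at most three times and the incidence graph remains planar if the original incidence graph was planar. -/

import Mathlib

/-- A literal is a sign together with a variable; `(true, v)` is the positive
literal `v` and `(false, v)` is the negative literal `¬v`. -/
abbrev Lit (V : Type*) := Bool × V

/-- A clause is a finite set of literals. -/
abbrev Clause (V : Type*) := Finset (Lit V)

/-- An assignment satisfies a clause if it makes at least one literal true. -/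
def SatClause {V : Type*} (σ : V → Bool) (C : Clause V) : Prop :=
  ∃ l ∈ C, σ l.2 = l.1

/-- An assignment satisfies a CNF formula (a collection of clauses) if it
satisfies every clause. -/
def Sat {V : Type*} (σ : V → Bool) (F : Set (Clause V)) : Prop :=
  ∀ C ∈ F, SatClause σ C

/-- A formula is satisfiable if some assignment satisfies it. -/
def Satisfiable {V : Type*} (F : Set (Clause V)) : Prop :=
  ∃ σ, Sat σ F

/-- A variable occurs (positively or negatively) in a clause. -/
def VarInClause {V : Type*} (v : V) (C : Clause V) : Prop :=
  (true, v) ∈ C ∨ (false, v) ∈ C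

/-- A variable occurs in a formula. -/
def VarInFormula {V : Type*} (v : V) (F : Set (Clause V)) : Prop :=
  ∃ C ∈ F, VarInClause v C

/-- `H` is a minor of `G`: there is a family of nonempty, pairwise disjoint,
connected branch sets in `G`, one for each vertex of `H`, such that every edge
of `H` is realized by an edge of `G` between the corresponding branch sets. -/
def SimpleGraph.IsMinorOf {β α : Type*} (H : SimpleGraph β) (G : SimpleGraph α) : Prop :=
  ∃ B : β → Set α,
    (∀ b, (B b).Nonempty) ∧
    (Pairwise fun b₁ b₂ => Disjoint (B b₁) (B b₂)) ∧
    (∀ b, (G.induce (B b)).Connected) ∧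
    ∀ ⦃b₁ b₂⦄, H.Adj b₁ b₂ → ∃ u ∈ B b₁, ∃ v ∈ B b₂, G.Adj u v

/-- Planarity, via Wagner's characterization: a graph is planar iff it has
neither `K₅` nor `K₃,₃` as a minor. -/
def SimpleGraph.IsPlanar {α : Type*} (G : SimpleGraph α) : Prop :=
  ¬ (completeGraph (Fin 5)).IsMinorOf G ∧
  ¬ (completeBipartiteGraph (Fin 3) (Fin 3)).IsMinorOf G

/-- The bipartite variable–clause incidence graph of a formula: one vertex per
variable, one vertex per clause, with an edge whenever the variable occurs
(positively or negatively) in the clause. -/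
def IncidenceGraph {V : Type*} (F : Set (Clause V)) : SimpleGraph (V ⊕ F) where
  Adj p q :=
    (∃ v C, p = Sum.inl v ∧ q = Sum.inr C ∧ VarInClause v (C : Clause V)) ∨
    (∃ v C, q = Sum.inl v ∧ p = Sum.inr C ∧ VarInClause v (C : Clause V))
  symm := by
    refine ⟨?_⟩
    rintro p q (⟨v, C, h1, h2, h3⟩ | ⟨v, C, h1, h2, h3⟩)
    · exact Or.inr ⟨v, C, h1, h2, h3⟩
    · exact Or.inl ⟨v, C, h1, h2, h3⟩
  loopless := by
    refine ⟨?_⟩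
    rintro p (⟨v, C, rfl, h2, -⟩ | ⟨v, C, rfl, h2, -⟩) <;> exact Sum.inl_ne_inr h2

open scoped Classical

/-- The positive literals of a clause. -/
def posPart {V : Type*} (C : Clause V) : Clause V := C.filter (fun l => l.1 = true)

/-- The negative literals of a clause. -/
def negPart {V : Type*} (C : Clause V) : Clause V := C.filter (fun l => l.1 = false)

/-- A clause is mixed if it contains a positive and a negative literal. -/
def IsMixed {V : Type*} (C : Clause V) : Prop :=
  (posPart C).Nonempty ∧ (negPart C).Nonempty

/-- The number of clauses of `F` in which the variable `x` appears. -/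
noncomputable def appearances {V : Type*} (x : V) (F : Finset (Clause V)) : ℕ :=
  (F.filter (fun C => VarInClause x C)).card

/-- The number of clauses of `F` in which `x` appears positively. -/
noncomputable def posApps {V : Type*} (x : V) (F : Finset (Clause V)) : ℕ :=
  (F.filter (fun C => (true, x) ∈ C)).card

/-- The number of clauses of `F` in which `x` appears negatively. -/
noncomputable def negApps {V : Type*} (x : V) (F : Finset (Clause V)) : ℕ :=
  (F.filter (fun C => (false, x) ∈ C)).card

/-- The instance obtained from `F` by applying Gold's rule to every mixed
clause, using the fresh variable `fresh C` for the mixed clause `C`. -/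
noncomputable def goldTransform {V : Type*} [DecidableEq V]
    (F : Finset (Clause V)) (fresh : Clause V → V) : Finset (Clause V) :=
  F.filter (fun C => ¬ IsMixed C) ∪
    (F.filter (fun C => IsMixed C)).image (fun C => posPart C ∪ {(true, fresh C)}) ∪
    (F.filter (fun C => IsMixed C)).image (fun C => negPart C ∪ {(false, fresh C)})

open scoped Classical

lemma aux_exit {β : Type*} {G : SimpleGraph β} {B S : Set β} :
    ∀ {x y : ↥B}, (G.induce B).Walk x y → (x : β) ∈ S → (y : β) ∉ S →
      ∃ z ∈ B ∩ S, ∃ w ∈ B \ S, G.Adj z w := by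
  intro x y p
  induction p with
  | nil => intro hx hy; exact absurd hx hy
  | @cons u v w h q ih =>
    intro hx hy
    by_cases hv : (v : β) ∈ S
    · exact ih hv hy
    · exact ⟨u, ⟨u.2, hx⟩, v, ⟨v.2, hv⟩, h⟩

lemma aux_nbr_inside {β : Type*} {G : SimpleGraph β} {B : Set β}
    (hconn : (G.induce B).Connected) {x y : β} (hx : x ∈ B) (hy : y ∈ B)
    (hxy : x ≠ y) : ∃ w ∈ B, w ≠ x ∧ G.Adj x w := by
  obtain ⟨p⟩ := hconn.preconnected ⟨x, hx⟩ ⟨y, hy⟩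
  obtain ⟨z, hz, w, hw, hzw⟩ := aux_exit (S := {x}) p rfl (fun h => hxy (Set.mem_singleton_iff.mp h).symm)
  have hz2 : z = x := hz.2
  subst hz2
  exact ⟨w, hw.1, fun h => hw.2 (h ▸ rfl), hzw⟩

lemma aux_pigeon {β γ : Type*} {Bs : γ → Set β}
    (hdisj : Pairwise fun b1 b2 => Disjoint (Bs b1) (Bs b2))
    {n : Fin 3 → γ} (hn : Function.Injective n) {p q : β}
    (h : ∀ k, p ∈ Bs (n k) ∨ q ∈ Bs (n k)) : False := by
  have hd : ∀ k k' : Fin 3, k ≠ k' → ∀ x, x ∈ Bs (n k) → x ∈ Bs (n k') → False := by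
    intro k k' hkk x h1 h2
    exact Set.disjoint_left.mp (hdisj (hn.ne hkk)) h1 h2
  rcases h 0 with h0 | h0 <;> rcases h 1 with h1 | h1 <;> rcases h 2 with h2 | h2
  · exact hd 0 1 (by decide) p h0 h1
  · exact hd 0 1 (by decide) p h0 h1
  · exact hd 0 2 (by decide) p h0 h2
  · exact hd 1 2 (by decide) q h1 h2
  · exact hd 1 2 (by decide) p h1 h2
  · exact hd 0 2 (by decide) q h0 h2
  · exact hd 0 1 (by decide) q h0 h1
  · exact hd 0 1 (by decide) q h0 h1

section
variable {α β γ ι : Type*}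
  {H : SimpleGraph γ} {G' : SimpleGraph β} {K : SimpleGraph α}

/-- The graph obtained by suppressing the internal path vertices. -/
private def supG (G' : SimpleGraph β) (s t a c : ι → β) (Int : β → Prop)
    (hac : ∀ i, a i ≠ c i) : SimpleGraph β where
  Adj x y := (G'.Adj x y ∧ ¬ Int x ∧ ¬ Int y) ∨
    (∃ i, (x = a i ∧ y = c i) ∨ (x = c i ∧ y = a i))
  symm := by
    refine ⟨?_⟩
    rintro x y (⟨h1, h2, h3⟩ | ⟨i, ⟨rfl, rfl⟩ | ⟨rfl, rfl⟩⟩)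
    · exact Or.inl ⟨h1.symm, h3, h2⟩
    · exact Or.inr ⟨i, Or.inr ⟨rfl, rfl⟩⟩
    · exact Or.inr ⟨i, Or.inl ⟨rfl, rfl⟩⟩
  loopless := by
    refine ⟨?_⟩
    rintro x (⟨h1, -, -⟩ | ⟨i, ⟨rfl, h⟩ | ⟨rfl, h⟩⟩)
    · exact G'.loopless.irrefl x h1
    · exact hac i h
    · exact hac i h.symm

lemma aux_master
    (hdeg : ∀ b : γ, ∃ n : Fin 3 → γ, Function.Injective n ∧ ∀ k, H.Adj b (n k))
    (s t a c : ι → β) (Int : β → Prop)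
    (hInt : ∀ x, Int x ↔ ∃ i, x = s i ∨ x = t i)
    (hsInj : Function.Injective s) (htInj : Function.Injective t)
    (hst : ∀ i j, s i ≠ t j)
    (ha : ∀ i, ¬ Int (a i)) (hc : ∀ i, ¬ Int (c i)) (hac : ∀ i, a i ≠ c i)
    (hs : ∀ i x, G'.Adj (s i) x ↔ x = a i ∨ x = t i)
    (ht : ∀ i x, G'.Adj (t i) x ↔ x = s i ∨ x = c i)
    (e : α → β) (he : Function.Injective e)
    (hcov : ∀ x : β, ¬ Int x → x ∈ Set.range e)
    (hK1 : ∀ x y : α, ¬ Int (e x) → ¬ Int (e y) → G'.Adj (e x) (e y) → K.Adj x y)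
    (hKadd : ∀ i, ∃ x y : α, e x = a i ∧ e y = c i ∧ K.Adj x y)
    (hm : H.IsMinorOf G') : H.IsMinorOf K := by
  classical
  obtain ⟨B, hne, hdisj, hconn, hedge⟩ := hm
  set G : SimpleGraph β := supG G' s t a c Int hac with hG
  -- basic facts about internal vertices
  have hsInt : ∀ i, Int (s i) := fun i => (hInt _).mpr ⟨i, Or.inl rfl⟩
  have htInt : ∀ i, Int (t i) := fun i => (hInt _).mpr ⟨i, Or.inr rfl⟩
  -- KL1 : no branch set is contained in a single internal path
  have KL1 : ∀ b i, ¬ (B b ⊆ {x | x = s i ∨ x = t i}) := by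
    intro b i hsub
    obtain ⟨n, hnInj, hnAdj⟩ := hdeg b
    -- each neighbour's branch set is disjoint from B b
    have hd : ∀ k, Disjoint (B b) (B (n k)) := fun k =>
      hdisj (fun h => (H.loopless.irrefl b) (h ▸ hnAdj k))
    -- each neighbour's branch set contains a neighbour of {s i, t i} not in B b
    have hmem : ∀ k, ∃ v ∈ B (n k), (v = a i ∨ v = t i ∨ v = s i ∨ v = c i) ∧ v ∉ B b := by
      intro k
      obtain ⟨u, hu, v, hv, huv⟩ := hedge (hnAdj k)
      have hvnb : v ∉ B b := fun hvb => Set.disjoint_left.mp (hd k) hvb hv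
      rcases hsub hu with rfl | rfl
      · rcases (hs i v).mp huv with rfl | rfl
        · exact ⟨_, hv, Or.inl rfl, hvnb⟩
        · exact ⟨_, hv, Or.inr (Or.inl rfl), hvnb⟩
      · rcases (ht i v).mp huv with rfl | rfl
        · exact ⟨_, hv, Or.inr (Or.inr (Or.inl rfl)), hvnb⟩
        · exact ⟨_, hv, Or.inr (Or.inr (Or.inr rfl)), hvnb⟩
    by_cases hsi : s i ∈ B b <;> by_cases hti : t i ∈ B b
    · -- both in B b : hitting pair (a i, c i)
      refine aux_pigeon hdisj hnInj (p := a i) (q := c i) (fun k => ?_)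
      obtain ⟨v, hv, hvcases, hvnb⟩ := hmem k
      rcases hvcases with rfl | rfl | rfl | rfl
      · exact Or.inl hv
      · exact absurd hti hvnb
      · exact absurd hsi hvnb
      · exact Or.inr hv
    · -- only s i : B b = {s i}; hitting pair (a i, t i)
      refine aux_pigeon hdisj hnInj (p := a i) (q := t i) (fun k => ?_)
      obtain ⟨u, hu, v, hv, huv⟩ := hedge (hnAdj k)
      have : u = s i := by rcases hsub hu with h | h; exact h; exact absurd (h ▸ hu) hti
      subst this
      rcases (hs i v).mp huv with rfl | rfl
      · exact Or.inl hv
      · exact Or.inr hv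
    · -- only t i : hitting pair (s i, c i)
      refine aux_pigeon hdisj hnInj (p := s i) (q := c i) (fun k => ?_)
      obtain ⟨u, hu, v, hv, huv⟩ := hedge (hnAdj k)
      have : u = t i := by rcases hsub hu with h | h; exact absurd (h ▸ hu) hsi; exact h
      subst this
      rcases (ht i v).mp huv with rfl | rfl
      · exact Or.inl hv
      · exact Or.inr hv
    · obtain ⟨x, hx⟩ := hne b
      rcases hsub hx with rfl | rfl
      · exact hsi hx
      · exact hti hx
  -- exit lemmas
  have KL2s : ∀ b i, s i ∈ B b → a i ∈ B b ∨ (t i ∈ B b ∧ c i ∈ B b) := by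
    intro b i hsi
    obtain ⟨y, hy, hyS⟩ : ∃ y ∈ B b, ¬ (y = s i ∨ y = t i) := by
      by_contra hcon
      push_neg at hcon
      exact KL1 b i (fun x hx => hcon x hx)
    obtain ⟨p⟩ := (hconn b).preconnected ⟨s i, hsi⟩ ⟨y, hy⟩
    obtain ⟨z, hz, w, hw, hzw⟩ := aux_exit (S := {x | x = s i ∨ x = t i}) p (Or.inl rfl) hyS
    rcases hz.2 with rfl | rfl
    · rcases (hs i w).mp hzw with rfl | rfl
      · exact Or.inl hw.1
      · exact absurd (Or.inr rfl) hw.2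
    · rcases (ht i w).mp hzw with rfl | rfl
      · exact absurd (Or.inl rfl) hw.2
      · exact Or.inr ⟨hz.1, hw.1⟩
  have KL2t : ∀ b i, t i ∈ B b → c i ∈ B b ∨ (s i ∈ B b ∧ a i ∈ B b) := by
    intro b i hti
    obtain ⟨y, hy, hyS⟩ : ∃ y ∈ B b, ¬ (y = s i ∨ y = t i) := by
      by_contra hcon
      push_neg at hcon
      exact KL1 b i (fun x hx => hcon x hx)
    obtain ⟨p⟩ := (hconn b).preconnected ⟨t i, hti⟩ ⟨y, hy⟩
    obtain ⟨z, hz, w, hw, hzw⟩ := aux_exit (S := {x | x = s i ∨ x = t i}) p (Or.inr rfl) hyS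
    rcases hz.2 with rfl | rfl
    · rcases (hs i w).mp hzw with rfl | rfl
      · exact Or.inr ⟨hz.1, hw.1⟩
      · exact absurd (Or.inr rfl) hw.2
    · rcases (ht i w).mp hzw with rfl | rfl
      · exact absurd (Or.inl rfl) hw.2
      · exact Or.inl hw.1
  -- the new branch sets in G
  set B' : γ → Set β := fun b => B b \ {x | Int x} with hB'
  have hB'sub : ∀ b, B' b ⊆ B b := fun b => Set.diff_subset
  -- nonemptiness
  have hne' : ∀ b, (B' b).Nonempty := by
    intro b
    by_contra hcon
    rw [Set.not_nonempty_iff_eq_empty] at hcon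
    have hBInt : ∀ x ∈ B b, Int x := by
      intro x hx
      by_contra hnx
      exact (Set.eq_empty_iff_forall_notMem.mp hcon x) ⟨hx, hnx⟩
    obtain ⟨x, hx⟩ := hne b
    obtain ⟨i, hi⟩ := (hInt x).mp (hBInt x hx)
    refine KL1 b i (fun y hy => ?_)
    by_contra hyS
    obtain ⟨p⟩ := (hconn b).preconnected ⟨x, hx⟩ ⟨y, hy⟩
    obtain ⟨z, hz, w, hw, hzw⟩ := aux_exit (S := {x | x = s i ∨ x = t i}) p hi hyS
    have hwInt := hBInt w hw.1
    rcases hz.2 with rfl | rfl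
    · rcases (hs i w).mp hzw with rfl | rfl
      · exact ha i hwInt
      · exact hw.2 (Or.inr rfl)
    · rcases (ht i w).mp hzw with rfl | rfl
      · exact hw.2 (Or.inl rfl)
      · exact hc i hwInt
  -- connectivity : walk surgery
  have hsurg : ∀ b, ∀ n : ℕ, ∀ x y : ↥(B b), ∀ p : (G'.induce (B b)).Walk x y,
      p.length ≤ n → ∀ hx : ¬ Int (x : β), ∀ hy : ¬ Int (y : β),
      (G.induce (B' b)).Reachable ⟨x, x.2, hx⟩ ⟨y, y.2, hy⟩ := by
    intro b n
    induction n with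
    | zero =>
      intro x y p hlen hx hy
      cases p with
      | nil => exact SimpleGraph.Reachable.refl _
      | cons h q => simp at hlen
    | succ m ih =>
      intro x y p hlen hx hy
      cases p with
      | nil => exact SimpleGraph.Reachable.refl _
      | @cons _ z _ h q =>
        by_cases hz : Int (z : β)
        · obtain ⟨i, hi⟩ := (hInt _).mp hz
          rcases hi with hzs | hzt
          · -- z = s i ; x = a i
            have hxa : (x : β) = a i := by
              have := (hs i (x : β)).mp (by rw [← hzs]; exact h.symm)
              rcases this with h' | h'
              · exact h'
              · exact absurd (h' ▸ (htInt i)) hx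
            -- q : Walk z y with z internal, y not: q must be cons
            cases q with
            | nil => exact absurd hz hy
            | @cons _ w _ h2 r =>
              have hw2 : (w : β) = a i ∨ (w : β) = t i := (hs i (w : β)).mp (by rw [← hzs]; exact h2)
              rcases hw2 with hwa | hwt
              · -- w = x ; recurse on r
                have hwx : w = x := Subtype.ext (by rw [hwa, hxa])
                subst hwx
                exact ih w y r (by simp at hlen; omega) hx hy
              · -- w = t i ; r must be cons
                cases r with
                | nil => exact absurd (hwt ▸ htInt i) hy
                | @cons _ w' _ h3 r' =>
                  have hw3 : (w' : β) = s i ∨ (w' : β) = c i := (ht i (w' : β)).mp (by rw [← hwt]; exact h3)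
                  rcases hw3 with hws | hwc
                  · -- w' = z : recurse on cons h r'
                    have hwz : w' = z := Subtype.ext (by rw [hws, hzs])
                    subst hwz
                    exact ih x y (SimpleGraph.Walk.cons h r') (by simp at hlen ⊢; omega) hx hy
                  · -- w' = c i : added edge x -- w'
                    have hw'I : ¬ Int (w' : β) := hwc ▸ hc i
                    have hadj : G.Adj (x : β) (w' : β) :=
                      Or.inr ⟨i, Or.inl ⟨hxa, hwc⟩⟩
                    have step : (G.induce (B' b)).Adj ⟨x, x.2, hx⟩ ⟨w', w'.2, hw'I⟩ := hadj
                    exact (step.reachable).trans (ih w' y r' (by simp at hlen; omega) hw'I hy)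
          · -- z = t i ; x = c i   (symmetric)
            have hxc : (x : β) = c i := by
              have := (ht i (x : β)).mp (by rw [← hzt]; exact h.symm)
              rcases this with h' | h'
              · exact absurd (h' ▸ (hsInt i)) hx
              · exact h'
            cases q with
            | nil => exact absurd hz hy
            | @cons _ w _ h2 r =>
              have hw2 : (w : β) = s i ∨ (w : β) = c i := (ht i (w : β)).mp (by rw [← hzt]; exact h2)
              rcases hw2 with hws | hwc
              · -- w = s i ; r must be cons
                cases r with
                | nil => exact absurd (hws ▸ hsInt i) hy
                | @cons _ w' _ h3 r' =>
                  have hw3 : (w' : β) = a i ∨ (w' : β) = t i := (hs i (w' : β)).mp (by rw [← hws]; exact h3)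
                  rcases hw3 with hwa | hwt
                  · -- added edge x -- w'
                    have hw'I : ¬ Int (w' : β) := hwa ▸ ha i
                    have hadj : G.Adj (x : β) (w' : β) :=
                      Or.inr ⟨i, Or.inr ⟨hxc, hwa⟩⟩
                    have step : (G.induce (B' b)).Adj ⟨x, x.2, hx⟩ ⟨w', w'.2, hw'I⟩ := hadj
                    exact (step.reachable).trans (ih w' y r' (by simp at hlen; omega) hw'I hy)
                  · have hwz : w' = z := Subtype.ext (by rw [hwt, hzt])
                    subst hwz
                    exact ih x y (SimpleGraph.Walk.cons h r') (by simp at hlen ⊢; omega) hx hy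
              · have hwx : w = x := Subtype.ext (by rw [hwc, hxc])
                subst hwx
                exact ih w y r (by simp at hlen; omega) hx hy
        · -- z not internal : ordinary step
          have hadj : G.Adj (x : β) (z : β) := Or.inl ⟨h, hx, hz⟩
          have step : (G.induce (B' b)).Adj ⟨x, x.2, hx⟩ ⟨z, z.2, hz⟩ := hadj
          exact (step.reachable).trans (ih z y q (by simp at hlen; omega) hz hy)
  have hconn' : ∀ b, (G.induce (B' b)).Connected := by
    intro b
    rw [SimpleGraph.connected_iff]
    refine ⟨?_, ?_⟩
    · rintro ⟨x, hxB, hxI⟩ ⟨y, hyB, hyI⟩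
      obtain ⟨p⟩ := (hconn b).preconnected ⟨x, hxB⟩ ⟨y, hyB⟩
      exact hsurg b p.length ⟨x, hxB⟩ ⟨y, hyB⟩ p le_rfl hxI hyI
    · obtain ⟨x, hx⟩ := hne' b
      exact ⟨⟨x, hx⟩⟩
  -- edge realization in G
  have hedge' : ∀ ⦃b₁ b₂⦄, H.Adj b₁ b₂ → ∃ u ∈ B' b₁, ∃ v ∈ B' b₂, G.Adj u v := by
    intro b₁ b₂ hb
    have hb12 : b₁ ≠ b₂ := fun h => H.loopless.irrefl b₂ (h ▸ hb)
    have hdj : Disjoint (B b₁) (B b₂) := hdisj hb12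
    obtain ⟨u, hu, v, hv, huv⟩ := hedge hb
    by_cases huI : Int u <;> by_cases hvI : Int v
    · -- both internal : u, v on same path adjacent
      obtain ⟨i, hi⟩ := (hInt u).mp huI
      rcases hi with rfl | rfl
      · have := (hs i v).mp huv
        rcases this with rfl | rfl
        · exact absurd hvI (ha i)
        · -- u = s i ∈ B b₁, v = t i ∈ B b₂
          have h1 : a i ∈ B b₁ := by
            rcases KL2s b₁ i hu with h' | ⟨h', -⟩
            · exact h'
            · exact absurd h' (fun hh => Set.disjoint_left.mp hdj hh hv)
          have h2 : c i ∈ B b₂ := by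
            rcases KL2t b₂ i hv with h' | ⟨h', -⟩
            · exact h'
            · exact absurd h' (fun hh => Set.disjoint_right.mp hdj hh hu) 
          exact ⟨a i, ⟨h1, ha i⟩, c i, ⟨h2, hc i⟩, Or.inr ⟨i, Or.inl ⟨rfl, rfl⟩⟩⟩
      · have := (ht i v).mp huv
        rcases this with rfl | rfl
        · -- u = t i ∈ B b₁, v = s i ∈ B b₂
          have h1 : c i ∈ B b₁ := by
            rcases KL2t b₁ i hu with h' | ⟨h', -⟩
            · exact h'
            · exact absurd h' (fun hh => Set.disjoint_left.mp hdj hh hv)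
          have h2 : a i ∈ B b₂ := by
            rcases KL2s b₂ i hv with h' | ⟨h', -⟩
            · exact h'
            · exact absurd h' (fun hh => Set.disjoint_right.mp hdj hh hu)
          exact ⟨c i, ⟨h1, hc i⟩, a i, ⟨h2, ha i⟩, Or.inr ⟨i, Or.inr ⟨rfl, rfl⟩⟩⟩
        · exact absurd hvI (hc i)
    · -- u internal, v not
      obtain ⟨i, hi⟩ := (hInt u).mp huI
      rcases hi with rfl | rfl
      · have := (hs i v).mp huv
        rcases this with rfl | rfl
        · -- v = a i ∈ B b₂; need c i ∈ B b₁
          have h1 : c i ∈ B b₁ := by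
            rcases KL2s b₁ i hu with h' | ⟨-, h'⟩
            · exact absurd h' (fun hh => Set.disjoint_left.mp hdj hh hv)
            · exact h'
          exact ⟨c i, ⟨h1, hc i⟩, a i, ⟨hv, ha i⟩, Or.inr ⟨i, Or.inr ⟨rfl, rfl⟩⟩⟩
        · exact absurd (htInt i) hvI
      · have := (ht i v).mp huv
        rcases this with rfl | rfl
        · exact absurd (hsInt i) hvI
        · have h1 : a i ∈ B b₁ := by
            rcases KL2t b₁ i hu with h' | ⟨-, h'⟩
            · exact absurd h' (fun hh => Set.disjoint_left.mp hdj hh hv)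
            · exact h'
          exact ⟨a i, ⟨h1, ha i⟩, c i, ⟨hv, hc i⟩, Or.inr ⟨i, Or.inl ⟨rfl, rfl⟩⟩⟩
    · -- v internal, u not : symmetric via huv.symm
      obtain ⟨i, hi⟩ := (hInt v).mp hvI
      rcases hi with rfl | rfl
      · have := (hs i u).mp huv.symm
        rcases this with rfl | rfl
        · have h2 : c i ∈ B b₂ := by
            rcases KL2s b₂ i hv with h' | ⟨-, h'⟩
            · exact absurd h' (fun hh => Set.disjoint_right.mp hdj hh hu)
            · exact h'
          exact ⟨a i, ⟨hu, ha i⟩, c i, ⟨h2, hc i⟩, Or.inr ⟨i, Or.inl ⟨rfl, rfl⟩⟩⟩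
        · exact absurd (htInt i) huI
      · have := (ht i u).mp huv.symm
        rcases this with rfl | rfl
        · exact absurd (hsInt i) huI
        · have h2 : a i ∈ B b₂ := by
            rcases KL2t b₂ i hv with h' | ⟨-, h'⟩
            · exact absurd h' (fun hh => Set.disjoint_right.mp hdj hh hu)
            · exact h'
          exact ⟨c i, ⟨hu, hc i⟩, a i, ⟨h2, ha i⟩, Or.inr ⟨i, Or.inr ⟨rfl, rfl⟩⟩⟩
    · exact ⟨u, ⟨hu, huI⟩, v, ⟨hv, hvI⟩, Or.inl ⟨huv, huI, hvI⟩⟩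
  -- transfer along e to K
  have hKadj : ∀ xu xv : α, ¬ Int (e xu) → ¬ Int (e xv) → G.Adj (e xu) (e xv) → K.Adj xu xv := by
    intro xu xv h1 h2 hadj
    rcases hadj with ⟨h', h1', h2'⟩ | ⟨i, ⟨hxa, hxc⟩ | ⟨hxc, hxa⟩⟩
    · exact hK1 xu xv h1 h2 h'
    · obtain ⟨x', y', hex, hey, hK⟩ := hKadd i
      rwa [he (hxa.trans hex.symm), he (hxc.trans hey.symm)]
    · obtain ⟨x', y', hex, hey, hK⟩ := hKadd i
      rw [he (hxc.trans hey.symm), he (hxa.trans hex.symm)]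
      exact hK.symm
  set B'' : γ → Set α := fun b => {x | e x ∈ B' b} with hB''
  have hB'NI : ∀ b, ∀ x ∈ B' b, ¬ Int x := fun b x hx => hx.2
  refine ⟨B'', ?_, ?_, ?_, ?_⟩
  · intro b
    obtain ⟨x, hx⟩ := hne' b
    obtain ⟨x', rfl⟩ := hcov x (hB'NI b x hx)
    exact ⟨x', hx⟩
  · intro b₁ b₂ h12
    rw [Set.disjoint_left]
    intro x hx1 hx2
    exact Set.disjoint_left.mp ((hdisj h12).mono (hB'sub b₁) (hB'sub b₂)) hx1 hx2
  · intro b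
    rw [SimpleGraph.connected_iff]
    constructor
    · rintro x y
      obtain ⟨p⟩ := (hconn' b).preconnected ⟨e x, x.2⟩ ⟨e y, y.2⟩
      -- map the walk back
      have : ∀ n : ℕ, ∀ u v : ↥(B' b), ∀ p : (G.induce (B' b)).Walk u v, p.length ≤ n →
          ∀ (xu xv : ↥(B'' b)), e xu = (u : β) → e xv = (v : β) →
          (K.induce (B'' b)).Reachable xu xv := by
        intro n
        induction n with
        | zero =>
          intro u v p hlen xu xv hu hv
          cases p with
          | nil =>
            have : xu = xv := Subtype.ext (he (by rw [hu, hv]))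
            rw [this]
          | cons h q => simp at hlen
        | succ m ih =>
          intro u v p hlen xu xv hu hv
          cases p with
          | nil =>
            have : xu = xv := Subtype.ext (he (by rw [hu, hv]))
            rw [this]
          | @cons _ z _ h q =>
            obtain ⟨xz, hxz⟩ := hcov (z : β) (hB'NI b _ z.2)
            have hxzB : xz ∈ B'' b := by rw [hB'']; simp only [Set.mem_setOf_eq, hxz]; exact z.2
            have hadj : (K.induce (B'' b)).Adj xu ⟨xz, hxzB⟩ :=
              hKadj xu xz (hu ▸ hB'NI b _ u.2) (hxz ▸ hB'NI b _ z.2) (by rw [hu, hxz]; exact h)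
            exact hadj.reachable.trans (ih z v q (by simp at hlen; omega) ⟨xz, hxzB⟩ xv hxz hv)
      exact this p.length _ _ p le_rfl x y rfl rfl
    · obtain ⟨x, hx⟩ := hne' b
      obtain ⟨x', rfl⟩ := hcov x (hB'NI b x hx)
      exact ⟨⟨x', hx⟩⟩
  · intro b₁ b₂ hb
    obtain ⟨u, hu, v, hv, huv⟩ := hedge' hb
    obtain ⟨xu, rfl⟩ := hcov u (hB'NI b₁ u hu)
    obtain ⟨xv, rfl⟩ := hcov v (hB'NI b₂ v hv)
    exact ⟨xu, hu, xv, hv, hKadj xu xv (hB'NI b₁ _ hu) (hB'NI b₂ _ hv) huv⟩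
end
lemma aux_deg_K5 : ∀ b : Fin 5, ∃ n : Fin 3 → Fin 5, Function.Injective n ∧
    ∀ k, (SimpleGraph.completeGraph (Fin 5)).Adj b (n k) := by
  intro b
  fin_cases b
  · exact ⟨![1,2,3], by decide, by intro k; fin_cases k <;> simp [SimpleGraph.completeGraph]⟩
  · exact ⟨![0,2,3], by decide, by intro k; fin_cases k <;> simp [SimpleGraph.completeGraph]⟩
  · exact ⟨![0,1,3], by decide, by intro k; fin_cases k <;> simp [SimpleGraph.completeGraph]⟩
  · exact ⟨![0,1,2], by decide, by intro k; fin_cases k <;> simp [SimpleGraph.completeGraph]⟩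
  · exact ⟨![0,1,2], by decide, by intro k; fin_cases k <;> simp [SimpleGraph.completeGraph]⟩

lemma aux_deg_K33 : ∀ b : Fin 3 ⊕ Fin 3, ∃ n : Fin 3 → Fin 3 ⊕ Fin 3,
    Function.Injective n ∧ ∀ k, (completeBipartiteGraph (Fin 3) (Fin 3)).Adj b (n k) := by
  rintro (x | x)
  · exact ⟨fun k => Sum.inr k, fun a b h => by simpa using h, fun k => by simp⟩
  · exact ⟨fun k => Sum.inl k, fun a b h => by simpa using h, fun k => by simp⟩
section Inst
variable {V : Type*} [DecidableEq V]

/-- The clause replacing the `b`-side of a mixed clause. -/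
noncomputable def pn (fresh : Clause V → V) (b : Bool) (C : Clause V) : Clause V :=
  (if b then posPart C else negPart C) ∪ {(b, fresh C)}

lemma aux_mem_gold (F : Finset (Clause V)) (fresh : Clause V → V) (D : Clause V) :
    D ∈ goldTransform F fresh ↔
      (D ∈ F ∧ ¬ IsMixed D) ∨ ∃ C, C ∈ F ∧ IsMixed C ∧ ∃ b : Bool, D = pn fresh b C := by
  simp only [goldTransform, Finset.mem_union, Finset.mem_image, Finset.mem_filter]
  constructor
  · rintro ((⟨h1, h2⟩ | ⟨C, ⟨hC1, hC2⟩, rfl⟩) | ⟨C, ⟨hC1, hC2⟩, rfl⟩)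
    · exact Or.inl ⟨h1, h2⟩
    · exact Or.inr ⟨C, hC1, hC2, true, rfl⟩
    · exact Or.inr ⟨C, hC1, hC2, false, rfl⟩
  · rintro (⟨h1, h2⟩ | ⟨C, hC1, hC2, b, rfl⟩)
    · exact Or.inl (Or.inl ⟨h1, h2⟩)
    · cases b
      · exact Or.inr ⟨C, ⟨hC1, hC2⟩, rfl⟩
      · exact Or.inl (Or.inr ⟨C, ⟨hC1, hC2⟩, rfl⟩)

lemma aux_mem_part (b b' : Bool) (C : Clause V) (v : V) :
    (b', v) ∈ (if b then posPart C else negPart C) ↔ (b', v) ∈ C ∧ b' = b := by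
  cases b <;> simp [_root_.posPart, _root_.negPart, Finset.mem_filter]

lemma aux_mem_part_image (b : Bool) (C : Clause V) (v : V) :
    v ∈ ((if b then posPart C else negPart C).image Prod.snd) ↔ (b, v) ∈ C := by
  rw [Finset.mem_image]
  constructor
  · rintro ⟨⟨b2, v2⟩, hl, h2⟩
    cases h2
    obtain ⟨h3, rfl⟩ := (aux_mem_part b b2 C v2).mp hl
    exact h3
  · intro h
    exact ⟨(b, v), (aux_mem_part b b C v).mpr ⟨h, rfl⟩, rfl⟩

lemma aux_var_pn (fresh : Clause V → V) (b : Bool) (C : Clause V) (v : V) :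
    VarInClause v (pn fresh b C) ↔ (b, v) ∈ C ∨ v = fresh C := by
  have hmem : ∀ b' : Bool, (b', v) ∈ pn fresh b C ↔
      ((b', v) ∈ C ∧ b' = b) ∨ (b' = b ∧ v = fresh C) := by
    intro b'
    simp only [pn, Finset.mem_union, Finset.mem_singleton, aux_mem_part, Prod.ext_iff]
  constructor
  · rintro (h | h)
    · rcases (hmem true).mp h with ⟨h1, rfl⟩ | ⟨rfl, h2⟩
      · exact Or.inl h1
      · exact Or.inr h2
    · rcases (hmem false).mp h with ⟨h1, rfl⟩ | ⟨rfl, h2⟩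
      · exact Or.inl h1
      · exact Or.inr h2
  · rintro (h | rfl)
    · have : ((b, v) ∈ pn fresh b C) := (hmem b).mpr (Or.inl ⟨h, rfl⟩)
      cases b
      · exact Or.inr this
      · exact Or.inl this
    · have : ((b, fresh C) ∈ pn fresh b C) := (hmem b).mpr (Or.inr ⟨rfl, rfl⟩)
      cases b
      · exact Or.inr this
      · exact Or.inl this

lemma aux_small (F : Finset (Clause V)) (fresh : Clause V → V)
    (hsize : ∀ C ∈ F, (C.image Prod.snd).card = 2 ∨ (C.image Prod.snd).card = 3)
    (hnocomp : ∀ C ∈ F, ∀ v : V, ¬ ((true, v) ∈ C ∧ (false, v) ∈ C))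
    (C : Clause V) (hC : C ∈ F) (hm : IsMixed C) :
    ∃ (bb : Bool) (v0 : V), ((if bb then posPart C else negPart C).image Prod.snd) = {v0} := by
  classical
  have hdisj : Disjoint ((posPart C).image Prod.snd) ((negPart C).image Prod.snd) := by
    rw [Finset.disjoint_left]
    intro v hv1 hv2
    exact hnocomp C hC v ⟨(aux_mem_part_image true C v).mp (by simpa using hv1),
      (aux_mem_part_image false C v).mp (by simpa using hv2)⟩
  have hunion : C.image Prod.snd = (posPart C).image Prod.snd ∪ (negPart C).image Prod.snd := by
    rw [← Finset.image_union]
    congr 1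
    ext ⟨b, v⟩
    cases b <;> simp [_root_.posPart, _root_.negPart]
  have hcard : ((posPart C).image Prod.snd).card + ((negPart C).image Prod.snd).card =
      (C.image Prod.snd).card := by
    rw [hunion, Finset.card_union_of_disjoint hdisj]
  have h1 : 1 ≤ ((posPart C).image Prod.snd).card :=
    Finset.card_pos.mpr ((hm.1).image _)
  have h2 : 1 ≤ ((negPart C).image Prod.snd).card :=
    Finset.card_pos.mpr ((hm.2).image _)
  have h3 : ((posPart C).image Prod.snd).card = 1 ∨ ((negPart C).image Prod.snd).card = 1 := by
    rcases hsize C hC with h | h <;> omega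
  rcases h3 with h | h
  · obtain ⟨v0, hv0⟩ := Finset.card_eq_one.mp h
    exact ⟨true, v0, by simpa using hv0⟩
  · obtain ⟨v0, hv0⟩ := Finset.card_eq_one.mp h
    exact ⟨false, v0, by simpa using hv0⟩

end Inst
section Inst2
variable {V : Type*} [DecidableEq V]

lemma aux_inc_adj_inr {F : Set (Clause V)} (D : ↥F) (x : V ⊕ ↥F) :
    (IncidenceGraph F).Adj (Sum.inr D) x ↔
      ∃ v, x = Sum.inl v ∧ VarInClause v (D : Clause V) := by
  constructor
  · rintro (⟨v, C, h1, -, -⟩ | ⟨v, C, h1, h2, h3⟩)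
    · exact absurd h1 (by simp)
    · obtain rfl : D = C := Sum.inr_injective h2
      exact ⟨v, h1, h3⟩
  · rintro ⟨v, rfl, h⟩
    exact Or.inr ⟨v, D, rfl, rfl, h⟩

lemma aux_inc_adj_inl {F : Set (Clause V)} (v : V) (x : V ⊕ ↥F) :
    (IncidenceGraph F).Adj (Sum.inl v) x ↔
      ∃ D : ↥F, x = Sum.inr D ∧ VarInClause v (D : Clause V) := by
  constructor
  · rintro (⟨w, C, h1, h2, h3⟩ | ⟨w, C, h1, h2, -⟩)
    · obtain rfl : v = w := Sum.inl_injective h1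
      exact ⟨C, h2, h3⟩
    · exact absurd h2 (by simp)
  · rintro ⟨D, rfl, h⟩
    exact Or.inl ⟨v, D, rfl, rfl, h⟩

lemma aux_inc_not_ll {F : Set (Clause V)} (v w : V) :
    ¬ (IncidenceGraph F).Adj (Sum.inl v) (Sum.inl w) := by
  rintro (⟨a, b, -, h, -⟩ | ⟨a, b, -, h, -⟩) <;> exact absurd h (by simp)

lemma aux_inc_not_rr {F : Set (Clause V)} (D E : ↥F) :
    ¬ (IncidenceGraph F).Adj (Sum.inr D) (Sum.inr E) := by
  rintro (⟨a, b, h, -, -⟩ | ⟨a, b, h, -, -⟩) <;> exact absurd h (by simp)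

lemma aux_fresh_pn (F : Finset (Clause V)) (fresh : Clause V → V)
    (hfresh_inj : Set.InjOn fresh {C | C ∈ F ∧ IsMixed C})
    (hfresh_new : ∀ C ∈ F, IsMixed C → ∀ C' ∈ F, ¬ VarInClause (fresh C) C') :
    ∀ C, C ∈ F → IsMixed C → ∀ C', C' ∈ F → IsMixed C' → ∀ b : Bool,
      VarInClause (fresh C) (pn fresh b C') → C = C' := by
  intro C hC hmC C' hC' hmC' b hv
  rcases (aux_var_pn fresh b C' (fresh C)).mp hv with h | h
  · refine absurd (show VarInClause (fresh C) C' from ?_) (hfresh_new C hC hmC C' hC')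
    cases b
    · exact Or.inr h
    · exact Or.inl h
  · exact hfresh_inj ⟨hC, hmC⟩ ⟨hC', hmC'⟩ h

set_option maxHeartbeats 2000000 in
lemma aux_transfer (F : Finset (Clause V)) (fresh : Clause V → V)
    (hfresh_inj : Set.InjOn fresh {C | C ∈ F ∧ IsMixed C})
    (hfresh_new : ∀ C ∈ F, IsMixed C → ∀ C' ∈ F, ¬ VarInClause (fresh C) C')
    (hsize : ∀ C ∈ F, (C.image Prod.snd).card = 2 ∨ (C.image Prod.snd).card = 3)
    (hnocomp : ∀ C ∈ F, ∀ v : V, ¬ ((true, v) ∈ C ∧ (false, v) ∈ C))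
    {γ : Type*} {H : SimpleGraph γ}
    (hdeg : ∀ b : γ, ∃ n : Fin 3 → γ, Function.Injective n ∧ ∀ k, H.Adj b (n k))
    (hm : H.IsMinorOf (IncidenceGraph (↑(goldTransform F fresh) : Set (Clause V)))) :
    H.IsMinorOf (IncidenceGraph (↑F : Set (Clause V))) := by
  classical
  set F' : Finset (Clause V) := goldTransform F fresh with hF'def
  have hfresh_pn := aux_fresh_pn F fresh hfresh_inj hfresh_new
  have hpn_inj : ∀ C, C ∈ F → IsMixed C → ∀ C', C' ∈ F → IsMixed C' → ∀ b b' : Bool,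
      pn fresh b C = pn fresh b' C' → b = b' ∧ C = C' := by
    intro C hC hmC C' hC' hmC' b b' heq
    have h1 : (b, fresh C) ∈ pn fresh b C :=
      Finset.mem_union_right _ (Finset.mem_singleton_self _)
    rw [heq, pn, Finset.mem_union] at h1
    rcases h1 with h | h
    · obtain ⟨h2, rfl⟩ := (aux_mem_part b' b C' (fresh C)).mp h
      refine absurd (show VarInClause (fresh C) C' from ?_) (hfresh_new C hC hmC C' hC')
      cases b
      · exact Or.inr h2
      · exact Or.inl h2
    · rw [Finset.mem_singleton, Prod.ext_iff] at h
      exact ⟨h.1, hfresh_inj ⟨hC, hmC⟩ ⟨hC', hmC'⟩ h.2⟩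
  have hpn_not_F : ∀ C, C ∈ F → IsMixed C → ∀ b : Bool, ∀ D ∈ F, pn fresh b C ≠ D := by
    intro C hC hmC b D hD heq
    have h : VarInClause (fresh C) (pn fresh b C) := (aux_var_pn _ _ _ _).mpr (Or.inr rfl)
    rw [heq] at h
    exact hfresh_new C hC hmC D hD h
  -- the index type of subdivided edges
  let ι := {C : Clause V // C ∈ F ∧ IsMixed C}
  have hsmall : ∀ i : ι, ∃ (b : Bool) (w : V),
      ((if b then posPart i.1 else negPart i.1).image Prod.snd) = {w} :=
    fun i => aux_small F fresh hsize hnocomp i.1 i.2.1 i.2.2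
  choose bb v0 hbv using hsmall
  have hv0C : ∀ i : ι, (bb i, v0 i) ∈ i.1 := fun i =>
    (aux_mem_part_image _ _ _).mp (by rw [hbv i]; exact Finset.mem_singleton_self _)
  have hv0var : ∀ i : ι, VarInClause (v0 i) i.1 := by
    intro i
    have h := hv0C i
    cases hbbi : bb i <;> rw [hbbi] at h
    · exact Or.inr h
    · exact Or.inl h
  have hmemF' : ∀ (b : Bool) (i : ι), pn fresh b i.1 ∈ (↑F' : Set (Clause V)) := fun b i =>
    Finset.mem_coe.mpr ((aux_mem_gold F fresh _).mpr (Or.inr ⟨i.1, i.2.1, i.2.2, b, rfl⟩))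
  have hvar_s : ∀ (i : ι) (v : V),
      VarInClause v (pn fresh (bb i) i.1) ↔ v = v0 i ∨ v = fresh i.1 := by
    intro i v
    rw [aux_var_pn]
    constructor
    · rintro (h | h)
      · left
        have h2 : v ∈ ((if bb i then posPart i.1 else negPart i.1).image Prod.snd) :=
          (aux_mem_part_image _ _ _).mpr h
        rw [hbv i] at h2
        exact Finset.mem_singleton.mp h2
      · exact Or.inr h
    · rintro (rfl | rfl)
      · exact Or.inl (hv0C i)
      · exact Or.inr rfl
  -- path data
  set s : ι → V ⊕ ↥(↑F' : Set (Clause V)) :=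
    fun i => Sum.inr ⟨pn fresh (bb i) i.1, hmemF' _ i⟩ with hs_def
  set t : ι → V ⊕ ↥(↑F' : Set (Clause V)) := fun i => Sum.inl (fresh i.1) with ht_def
  set a : ι → V ⊕ ↥(↑F' : Set (Clause V)) := fun i => Sum.inl (v0 i) with ha_def
  set c : ι → V ⊕ ↥(↑F' : Set (Clause V)) :=
    fun i => Sum.inr ⟨pn fresh (!bb i) i.1, hmemF' _ i⟩ with hc_def
  set e : (V ⊕ ↥(↑F : Set (Clause V))) → (V ⊕ ↥(↑F' : Set (Clause V))) :=
    Sum.elim (fun v => Sum.inl v)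
      (fun D => if h : IsMixed D.1 then
          Sum.inr ⟨pn fresh (!bb ⟨D.1, Finset.mem_coe.mp D.2, h⟩) D.1,
            hmemF' _ ⟨D.1, Finset.mem_coe.mp D.2, h⟩⟩
        else Sum.inr ⟨D.1, Finset.mem_coe.mpr ((aux_mem_gold F fresh _).mpr
          (Or.inl ⟨Finset.mem_coe.mp D.2, h⟩))⟩) with he_def
  refine aux_master hdeg s t a c (fun x => ∃ i, x = s i ∨ x = t i) (fun x => Iff.rfl)
    ?_ ?_ ?_ ?_ ?_ ?_ ?_ ?_ e ?_ ?_ ?_ ?_ hm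
  · -- s injective
    intro i j h
    rw [hs_def] at h
    have h2 := Subtype.ext_iff.mp (Sum.inr_injective h)
    exact Subtype.ext (hpn_inj _ i.2.1 i.2.2 _ j.2.1 j.2.2 _ _ h2).2
  · -- t injective
    intro i j h
    rw [ht_def] at h
    exact Subtype.ext (hfresh_inj i.2 j.2 (Sum.inl_injective h))
  · -- s ≠ t
    intro i j h
    rw [hs_def, ht_def] at h
    exact absurd h (by simp)
  · -- a not internal
    rintro i ⟨j, h | h⟩
    · rw [ha_def, hs_def] at h
      exact absurd h (by simp)
    · rw [ha_def, ht_def] at h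
      have h2 : v0 i = fresh j.1 := Sum.inl_injective h
      have h3 : VarInClause (fresh j.1) i.1 := h2 ▸ hv0var i
      exact hfresh_new j.1 j.2.1 j.2.2 i.1 i.2.1 h3
  · -- c not internal
    rintro i ⟨j, h | h⟩
    · rw [hc_def, hs_def] at h
      have h2 := Subtype.ext_iff.mp (Sum.inr_injective h)
      obtain ⟨hb, hCeq⟩ := hpn_inj _ i.2.1 i.2.2 _ j.2.1 j.2.2 _ _ h2
      have : i = j := Subtype.ext hCeq
      subst this
      simp at hb
    · rw [hc_def, ht_def] at h
      exact absurd h (by simp)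
  · -- a ≠ c
    intro i h
    rw [ha_def, hc_def] at h
    exact absurd h (by simp)
  · -- neighbourhood of s
    intro i x
    rw [hs_def]
    rw [aux_inc_adj_inr]
    constructor
    · rintro ⟨v, rfl, hv⟩
      rcases (hvar_s i v).mp hv with rfl | rfl
      · exact Or.inl (by rw [ha_def])
      · exact Or.inr (by rw [ht_def])
    · rintro (rfl | rfl)
      · exact ⟨v0 i, by rw [ha_def], (hvar_s i _).mpr (Or.inl rfl)⟩
      · exact ⟨fresh i.1, by rw [ht_def], (hvar_s i _).mpr (Or.inr rfl)⟩
  · -- neighbourhood of t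
    intro i x
    rw [ht_def, aux_inc_adj_inl]
    constructor
    · rintro ⟨D, rfl, hv⟩
      rcases (aux_mem_gold F fresh D.1).mp (Finset.mem_coe.mp D.2) with
        ⟨hDF, hDnm⟩ | ⟨C, hCF, hCm, b, hD⟩
      · exact absurd hv (hfresh_new i.1 i.2.1 i.2.2 D.1 hDF)
      · have hCi : i.1 = C := hfresh_pn i.1 i.2.1 i.2.2 C hCF hCm b (hD ▸ hv)
        subst hCi
        by_cases hb2 : b = bb i
        · left
          rw [hs_def]
          congr 1
          exact Subtype.ext (by rw [hD, hb2])
        · right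
          have hb4 : b = !bb i := by revert hb2; cases b <;> cases bb i <;> simp
          rw [hc_def]
          congr 1
          exact Subtype.ext (by rw [hD, hb4])
    · rintro (rfl | rfl)
      · rw [hs_def]
        exact ⟨⟨pn fresh (bb i) i.1, hmemF' _ i⟩, rfl,
          (aux_var_pn fresh (bb i) i.1 (fresh i.1)).mpr (Or.inr rfl)⟩
      · rw [hc_def]
        exact ⟨⟨pn fresh (!bb i) i.1, hmemF' _ i⟩, rfl,
          (aux_var_pn fresh (!bb i) i.1 (fresh i.1)).mpr (Or.inr rfl)⟩
  · -- e injective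
    intro x y h
    rw [he_def] at h
    match x, y with
    | Sum.inl v, Sum.inl w => simpa using h
    | Sum.inl v, Sum.inr D =>
      exfalso
      simp only [Sum.elim_inl, Sum.elim_inr] at h
      split at h <;> simp at h
    | Sum.inr D, Sum.inl w =>
      exfalso
      simp only [Sum.elim_inl, Sum.elim_inr] at h
      split at h <;> simp at h
    | Sum.inr D, Sum.inr E =>
      simp only [Sum.elim_inr] at h
      congr 1
      split at h <;> split at h <;>
        (rename_i h1 h2; have h3 := Subtype.ext_iff.mp (Sum.inr_injective h))
      · exact Subtype.ext (hpn_inj _ (Finset.mem_coe.mp D.2) h1 _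
          (Finset.mem_coe.mp E.2) h2 _ _ h3).2
      · exact absurd h3 (hpn_not_F _ (Finset.mem_coe.mp D.2) h1 _ _ (Finset.mem_coe.mp E.2))
      · exact absurd h3.symm (hpn_not_F _ (Finset.mem_coe.mp E.2) h2 _ _ (Finset.mem_coe.mp D.2))
      · exact Subtype.ext h3
  · -- covering
    rintro (v | D) hnI
    · exact ⟨Sum.inl v, by simp only [he_def, Sum.elim_inl]⟩
    · rcases (aux_mem_gold F fresh D.1).mp (Finset.mem_coe.mp D.2) with
        ⟨hDF, hDnm⟩ | ⟨C, hCF, hCm, b, hD⟩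
      · refine ⟨Sum.inr ⟨D.1, Finset.mem_coe.mpr hDF⟩, ?_⟩
        rw [he_def]
        simp only [Sum.elim_inr]
        rw [dif_neg hDnm]
      · set i : ι := ⟨C, hCF, hCm⟩ with hi_def
        by_cases hb2 : b = bb i
        · exfalso
          refine hnI ⟨i, Or.inl ?_⟩
          rw [hs_def]
          congr 1
          exact Subtype.ext (by rw [hD, hb2])
        · refine ⟨Sum.inr ⟨C, Finset.mem_coe.mpr hCF⟩, ?_⟩
          rw [he_def]
          simp only [Sum.elim_inr]
          rw [dif_pos hCm]
          congr 1
          have hb4 : b = !bb i := by revert hb2; cases b <;> cases bb i <;> simp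
          exact Subtype.ext (by rw [hD, hb4])
  · -- hK1
    intro x y hx hy hadj
    match x, y with
    | Sum.inl v, Sum.inl w =>
      rw [he_def] at hadj
      exact absurd hadj (aux_inc_not_ll _ _)
    | Sum.inr D, Sum.inr E =>
      exfalso
      rw [he_def] at hadj
      simp only [Sum.elim_inr] at hadj
      split at hadj <;> split at hadj <;> exact aux_inc_not_rr _ _ hadj
    | Sum.inl v, Sum.inr D =>
      rw [he_def] at hadj hx hy
      simp only [Sum.elim_inl, Sum.elim_inr] at hadj hx hy
      split at hadj
      · rename_i hmix
        obtain ⟨E, hE, hv⟩ := (aux_inc_adj_inl v _).mp hadj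
        obtain rfl : E = _ := (Sum.inr_injective hE).symm
        rcases (aux_var_pn _ _ _ _).mp hv with h | h
        · refine Or.inl ⟨v, D, rfl, rfl, ?_⟩
          cases hbbi : (!bb ⟨D.1, Finset.mem_coe.mp D.2, hmix⟩) <;> rw [hbbi] at h
          · exact Or.inr h
          · exact Or.inl h
        · exfalso
          refine hx ⟨⟨D.1, Finset.mem_coe.mp D.2, hmix⟩, Or.inr ?_⟩
          simp only [ht_def]
          exact congrArg Sum.inl h
      · obtain ⟨E, hE, hv⟩ := (aux_inc_adj_inl v _).mp hadj
        obtain rfl : E = _ := (Sum.inr_injective hE).symm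
        exact Or.inl ⟨v, D, rfl, rfl, hv⟩
    | Sum.inr D, Sum.inl v =>
      rw [he_def] at hadj hx hy
      simp only [Sum.elim_inl, Sum.elim_inr] at hadj hx hy
      split at hadj
      · rename_i hmix
        obtain ⟨E, hE, hv⟩ := (aux_inc_adj_inl v _).mp hadj.symm
        obtain rfl : E = _ := (Sum.inr_injective hE).symm
        rcases (aux_var_pn _ _ _ _).mp hv with h | h
        · refine Or.inr ⟨v, D, rfl, rfl, ?_⟩
          cases hbbi : (!bb ⟨D.1, Finset.mem_coe.mp D.2, hmix⟩) <;> rw [hbbi] at h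
          · exact Or.inr h
          · exact Or.inl h
        · exfalso
          refine hy ⟨⟨D.1, Finset.mem_coe.mp D.2, hmix⟩, Or.inr ?_⟩
          simp only [ht_def]
          exact congrArg Sum.inl h
      · obtain ⟨E, hE, hv⟩ := (aux_inc_adj_inl v _).mp hadj.symm
        obtain rfl : E = _ := (Sum.inr_injective hE).symm
        exact Or.inr ⟨v, D, rfl, rfl, hv⟩
  · -- hKadd
    intro i
    refine ⟨Sum.inl (v0 i), Sum.inr ⟨i.1, Finset.mem_coe.mpr i.2.1⟩, ?_, ?_, ?_⟩
    · simp only [he_def, ha_def, Sum.elim_inl]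
    · rw [he_def, hc_def]
      simp only [Sum.elim_inr]
      rw [dif_pos i.2.2]
    · exact Or.inl ⟨v0 i, ⟨i.1, Finset.mem_coe.mpr i.2.1⟩, rfl, rfl, hv0var i⟩

end Inst2
section Count
variable {V : Type*} [DecidableEq V]

lemma aux_gold_eq (F : Finset (Clause V)) (fresh : Clause V → V) :
    goldTransform F fresh = F.filter (fun C => ¬ IsMixed C) ∪
      (F.filter (fun C => IsMixed C)).image (pn fresh true) ∪
      (F.filter (fun C => IsMixed C)).image (pn fresh false) := by
  have h1 : pn fresh true = fun C => _root_.posPart C ∪ {(true, fresh C)} :=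
    funext (fun C => by simp [pn])
  have h2 : pn fresh false = fun C => _root_.negPart C ∪ {(false, fresh C)} :=
    funext (fun C => by simp [pn])
  rw [goldTransform, h1, h2]

lemma aux_count (F : Finset (Clause V)) (fresh : Clause V → V)
    (hfresh_inj : Set.InjOn fresh {C | C ∈ F ∧ IsMixed C})
    (hfresh_new : ∀ C ∈ F, IsMixed C → ∀ C' ∈ F, ¬ VarInClause (fresh C) C')
    (happ : ∀ x : V, (∃ C ∈ F, VarInClause x C) →
      (posApps x F = 2 ∧ negApps x F = 1) ∨ (posApps x F = 1 ∧ negApps x F = 2))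
    (x : V) : appearances x (goldTransform F fresh) ≤ 3 := by
  classical
  set N : Finset (Clause V) := F.filter (fun C => ¬ IsMixed C) with hN
  set M : Finset (Clause V) := F.filter (fun C => IsMixed C) with hM
  set P : Clause V → Prop := fun C => VarInClause x C with hP
  have hsplit : appearances x (goldTransform F fresh) ≤
      (N.filter P).card + ((M.image (pn fresh true)).filter P).card +
      ((M.image (pn fresh false)).filter P).card := by
    rw [appearances, aux_gold_eq, Finset.filter_union, Finset.filter_union]
    exact le_trans (Finset.card_union_le _ _)
      (Nat.add_le_add_right (Finset.card_union_le _ _) _)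
  by_cases hfx : ∃ C, C ∈ F ∧ IsMixed C ∧ x = fresh C
  · obtain ⟨C₀, hC₀F, hC₀m, rfl⟩ := hfx
    have h1 : (N.filter P).card = 0 := by
      rw [Finset.card_eq_zero]
      refine Finset.eq_empty_of_forall_notMem (fun D hD => ?_)
      rw [Finset.mem_filter, hN, Finset.mem_filter] at hD
      exact hfresh_new C₀ hC₀F hC₀m D hD.1.1 hD.2
    have h2 : ∀ b : Bool, ((M.image (pn fresh b)).filter P).card ≤ 1 := by
      intro b
      refine Finset.card_le_one.mpr (fun D1 hD1 D2 hD2 => ?_)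
      rw [Finset.mem_filter, Finset.mem_image] at hD1 hD2
      obtain ⟨⟨C1, hC1, rfl⟩, hv1⟩ := hD1
      obtain ⟨⟨C2, hC2, rfl⟩, hv2⟩ := hD2
      rw [hM, Finset.mem_filter] at hC1 hC2
      have e1 : C₀ = C1 := aux_fresh_pn F fresh hfresh_inj hfresh_new
        C₀ hC₀F hC₀m C1 hC1.1 hC1.2 b hv1
      have e2 : C₀ = C2 := aux_fresh_pn F fresh hfresh_inj hfresh_new
        C₀ hC₀F hC₀m C2 hC2.1 hC2.2 b hv2
      rw [← e1, ← e2]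
    calc appearances (fresh C₀) (goldTransform F fresh) ≤ _ := hsplit
      _ ≤ 0 + 1 + 1 := by
          have := h2 true; have := h2 false; omega
      _ ≤ 3 := by norm_num
  · push_neg at hfx
    have hA2 : ∀ b : Bool, ((M.image (pn fresh b)).filter P).card ≤
        (M.filter (fun C => (b, x) ∈ C)).card := by
      intro b
      refine le_trans (Finset.card_le_card (show _ ⊆
        (M.filter (fun C => (b, x) ∈ C)).image (pn fresh b) from ?_)) Finset.card_image_le
      intro D hD
      rw [Finset.mem_filter, Finset.mem_image] at hD
      obtain ⟨⟨C, hC, rfl⟩, hv⟩ := hD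
      rw [hM, Finset.mem_filter] at hC
      rcases (aux_var_pn fresh b C x).mp hv with h | h
      · exact Finset.mem_image_of_mem _ (Finset.mem_filter.mpr
          ⟨Finset.mem_filter.mpr ⟨hC.1, hC.2⟩, h⟩)
      · exact absurd h (hfx C hC.1 hC.2)
    have hA1 : (N.filter P).card ≤ (N.filter (fun C => (true, x) ∈ C)).card +
        (N.filter (fun C => (false, x) ∈ C)).card := by
      refine le_trans (Finset.card_le_card ?_) (Finset.card_union_le _ _)
      intro D hD
      rw [Finset.mem_filter] at hD
      rcases hD.2 with h | h
      · exact Finset.mem_union_left _ (Finset.mem_filter.mpr ⟨hD.1, h⟩)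
      · exact Finset.mem_union_right _ (Finset.mem_filter.mpr ⟨hD.1, h⟩)
    have hNM : ∀ b : Bool, (N.filter (fun C => (b, x) ∈ C)).card +
        (M.filter (fun C => (b, x) ∈ C)).card = (F.filter (fun C => (b, x) ∈ C)).card := by
      intro b
      rw [hN, hM]
      simp only [Finset.filter_filter, Finset.card_filter]
      rw [← Finset.sum_add_distrib]
      refine Finset.sum_congr rfl fun D _ => ?_
      by_cases hp : IsMixed D <;> by_cases hq : (b, x) ∈ D <;> simp [hp, hq]
    have hsum : posApps x F + negApps x F ≤ 3 := by
      by_cases hocc : ∃ C ∈ F, VarInClause x C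
      · rcases happ x hocc with ⟨h1, h2⟩ | ⟨h1, h2⟩ <;> omega
      · push_neg at hocc
        have hp : posApps x F = 0 := by
          rw [posApps, Finset.card_eq_zero]
          refine Finset.eq_empty_of_forall_notMem (fun D hD => ?_)
          simp only [Finset.mem_filter] at hD
          exact hocc D hD.1 (Or.inl hD.2)
        have hn : negApps x F = 0 := by
          rw [negApps, Finset.card_eq_zero]
          refine Finset.eq_empty_of_forall_notMem (fun D hD => ?_)
          simp only [Finset.mem_filter] at hD
          exact hocc D hD.1 (Or.inr hD.2)
        omega
    have e1 := hNM true
    have e2 := hNM false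
    have b1 := hA2 true
    have b2 := hA2 false
    have hpa : (F.filter (fun C => (true, x) ∈ C)).card = posApps x F := by
      rw [posApps]; congr!
    have hna : (F.filter (fun C => (false, x) ∈ C)).card = negApps x F := by
      rw [negApps]; congr!
    omega

end Count
/-- If every clause of `F` has two or three distinct variables, no clause
contains a complementary pair, and every occurring variable appears in exactly
three clauses — one literal in two clauses and the complementary literal in
one clause — then after applying Gold's rule to every mixed clause (with fresh
and pairwise distinct new variables), every variable of the resulting instance
appears in at most three clauses, and the incidence graph remains planar if
the original incidence graph was planar. -/
theorem gold_transform_bounded_and_planar {V : Type*} [DecidableEq V]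
    (F : Finset (Clause V)) (fresh : Clause V → V)
    (hfresh_inj : Set.InjOn fresh {C | C ∈ F ∧ IsMixed C})
    (hfresh_new : ∀ C ∈ F, IsMixed C → ∀ C' ∈ F, ¬ VarInClause (fresh C) C')
    (hsize : ∀ C ∈ F, (C.image Prod.snd).card = 2 ∨ (C.image Prod.snd).card = 3)
    (hnocomp : ∀ C ∈ F, ∀ v : V, ¬ ((true, v) ∈ C ∧ (false, v) ∈ C))
    (happ : ∀ x : V, (∃ C ∈ F, VarInClause x C) →
      (posApps x F = 2 ∧ negApps x F = 1) ∨ (posApps x F = 1 ∧ negApps x F = 2)) :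
    (∀ x : V, appearances x (goldTransform F fresh) ≤ 3) ∧
    ((IncidenceGraph (↑F : Set (Clause V))).IsPlanar →
      (IncidenceGraph (↑(goldTransform F fresh) : Set (Clause V))).IsPlanar) := by
  constructor
  · intro x
    exact aux_count F fresh hfresh_inj hfresh_new happ x
  · intro hpl
    exact ⟨fun hmin => hpl.1
        (aux_transfer F fresh hfresh_inj hfresh_new hsize hnocomp aux_deg_K5 hmin),
      fun hmin => hpl.2
        (aux_transfer F fresh hfresh_inj hfresh_new hsize hnocomp aux_deg_K33 hmin)⟩
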